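/- Let F be a three-point subset of Euclidean space ℝⁿ. Then F has no focal points and dim_fH(F) = 1 if and only if the three points of F are collinear. -/
import Mathlib


open Metric

namespace FinDim

variable {X : Type*} [MetricSpace X]

/-- `ν_F(a)`: the distance from `a` to a nearest other point of `F`. -/
noncomputable def nu (F : Finset X) (a : X) : ℝ :=
  sInf {r : ℝ | ∃ x ∈ F, x ≠ a ∧ r = dist a x}

/-- `δ(F)`: the separation of `F`, the minimum distance between distinct points. -/
noncomputable def sep (F : Finset X) : ℝ :=
  sInf {r : ℝ | ∃ x ∈ F, ∃ y ∈ F, x ≠ y ∧ r = dist x y}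

/-- A 2-covering of `F`: a family of subsets of `F` covering `F`,
each member having at least two elements. -/
def IsTwoCover (F : Finset X) (U : Finset (Finset X)) : Prop :=
  (∀ V ∈ U, V ⊆ F) ∧ (∀ V ∈ U, 2 ≤ V.card) ∧ ∀ a ∈ F, ∃ V ∈ U, a ∈ V

/-- `Δ(𝒰)`: maximum diameter of the members of the family `𝒰`. -/
noncomputable def coverDiam (U : Finset (Finset X)) : ℝ :=
  sSup {r : ℝ | ∃ V ∈ U, r = Metric.diam (V : Set X)}

/-- `∇(F)`: the covering diameter of `F`. -/
noncomputable def nablaF (F : Finset X) : ℝ :=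
  sInf {r : ℝ | ∃ U : Finset (Finset X), IsTwoCover F U ∧ r = coverDiam U}

/-- `a` is a focal point of `F`. -/
def IsFocal (F : Finset X) (a : X) : Prop :=
  a ∈ F ∧ ∀ x ∈ F, x ≠ a → dist a x = Metric.diam (F : Set X)

/-- `H^s_𝒰(F) = Σ_{U ∈ 𝒰} Δ(U)^s`. -/
noncomputable def Hcov (U : Finset (Finset X)) (s : ℝ) : ℝ :=
  ∑ V ∈ U, Metric.diam (V : Set X) ^ s

/-- `H^s(F)`: minimum of `H^s_𝒰(F)` over 2-coverings `𝒰` with `Δ(𝒰) = ∇(F)`. -/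
noncomputable def HH (F : Finset X) (s : ℝ) : ℝ :=
  sInf {h : ℝ | ∃ U : Finset (Finset X),
    IsTwoCover F U ∧ coverDiam U = nablaF F ∧ h = Hcov U s}

/-- The finite Hausdorff dimension: the unique `s₀ ∈ (0,∞)` with
`H^{s₀}(F) = Δ(F)^{s₀}` (when `F` has no focal points). -/
noncomputable def dimfH (F : Finset X) : ℝ :=
  sInf {s : ℝ | 0 < s ∧ HH F s = Metric.diam (F : Set X) ^ s}

/-- `T_{∇(F)}(F)`: the minimal cardinality of a 2-covering `𝒰` with `Δ(𝒰) = ∇(F)`. -/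
noncomputable def Tmin (F : Finset X) : ℕ :=
  sInf {n : ℕ | ∃ U : Finset (Finset X),
    IsTwoCover F U ∧ coverDiam U = nablaF F ∧ U.card = n}

/-- The finite box dimension `dim_fB(F) = ln T_{∇(F)}(F) / ln (Δ(F)/∇(F))`. -/
noncomputable def dimfB (F : Finset X) : ℝ :=
  Real.log (Tmin F) / Real.log (Metric.diam (F : Set X) / nablaF F)

/-- `ν_A(x)` for a subset `A` of a metric space. -/
noncomputable def nuSet {Z : Type*} [MetricSpace Z] (A : Set Z) (x : Z) : ℝ :=
  sInf {r : ℝ | ∃ y ∈ A, y ≠ x ∧ r = dist x y}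

/-- `∇(A) = sup {ν_A(x) : x ∈ A}` for a subset `A` of a metric space. -/
noncomputable def nablaSet {Z : Type*} [MetricSpace Z] (A : Set Z) : ℝ :=
  sSup {r : ℝ | ∃ x ∈ A, r = nuSet A x}

end FinDim

section Aux

open FinDim

/-- Uniqueness of the exponent `s` with `p^s + q^s = r^s`. -/
lemma uniq_exponent {p q r s t : ℝ} (hp : 0 < p) (hq : 0 < q) (hpr : p < r) (hqr : q < r)
    (hst : s < t) (hs : p ^ s + q ^ s = r ^ s) (ht : p ^ t + q ^ t = r ^ t) : False := by
  have hr : 0 < r := hp.trans hpr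
  have hts : 0 < t - s := by linarith
  have hPr : p ^ (t - s) < r ^ (t - s) := Real.rpow_lt_rpow hp.le hpr hts
  have hQr : q ^ (t - s) < r ^ (t - s) := Real.rpow_lt_rpow hq.le hqr hts
  have h1 : p ^ t < p ^ s * r ^ (t - s) := by
    have e : p ^ t = p ^ s * p ^ (t - s) := by
      rw [← Real.rpow_add hp]; ring_nf
    rw [e]
    exact mul_lt_mul_of_pos_left hPr (Real.rpow_pos_of_pos hp s)
  have h2 : q ^ t < q ^ s * r ^ (t - s) := by
    have e : q ^ t = q ^ s * q ^ (t - s) := by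
      rw [← Real.rpow_add hq]; ring_nf
    rw [e]
    exact mul_lt_mul_of_pos_left hQr (Real.rpow_pos_of_pos hq s)
  have h3 : p ^ s * r ^ (t - s) + q ^ s * r ^ (t - s) = r ^ t := by
    rw [← add_mul, hs, ← Real.rpow_add hr]; ring_nf
  linarith

/-- The main computation for a sorted triple. -/
lemma triple_main {E : Type*} [NormedAddCommGroup E] [InnerProductSpace ℝ E] [DecidableEq E]
    (x y z : E)
    (hxy : x ≠ y) (hxz : x ≠ z) (hyz : y ≠ z)
    (h1 : dist x y ≤ dist x z) (h2 : dist x z ≤ dist y z) :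
    ((∀ a, ¬ IsFocal ({x, y, z} : Finset E) a) ∧
        dimfH ({x, y, z} : Finset E) = 1) ↔
      Collinear ℝ ((({x, y, z} : Finset E) : Set E)) := by
  set p := dist x y with hpdef
  set q := dist x z with hqdef
  set r := dist y z with hrdef
  have hp : 0 < p := dist_pos.2 hxy
  have hq : 0 < q := dist_pos.2 hxz
  have hr : 0 < r := dist_pos.2 hyz
  set Fs : Finset E := {x, y, z} with hFsdef
  have hFset : (Fs : Set E) = {x, y, z} := by simp [hFsdef]
  have hdiam : Metric.diam (Fs : Set E) = r := by
    rw [hFset, Metric.diam_triple, max_eq_right h1, max_eq_right h2]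
  have hpair_ne : ({x, y} : Finset E) ≠ {x, z} := by
    intro h
    have hy : y ∈ ({x, z} : Finset E) := h ▸ (by simp)
    simp only [Finset.mem_insert, Finset.mem_singleton] at hy
    rcases hy with hy | hy
    · exact hxy hy.symm
    · exact hyz hy
  set U₀ : Finset (Finset E) := {{x, y}, {x, z}} with hU₀def
  have hcov0 : IsTwoCover Fs U₀ := by
    refine ⟨?_, ?_, ?_⟩
    · intro V hV
      simp only [hU₀def, Finset.mem_insert, Finset.mem_singleton] at hV
      rcases hV with rfl | rfl <;>
        · intro u hu
          simp only [Finset.mem_insert, Finset.mem_singleton] at hu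
          simp only [hFsdef, Finset.mem_insert, Finset.mem_singleton]
          tauto
    · intro V hV
      simp only [hU₀def, Finset.mem_insert, Finset.mem_singleton] at hV
      rcases hV with rfl | rfl
      · rw [Finset.card_pair hxy]
      · rw [Finset.card_pair hxz]
    · intro a ha
      simp only [hFsdef, Finset.mem_insert, Finset.mem_singleton] at ha
      rcases ha with h | h | h
      · exact ⟨{x, y}, by simp [hU₀def], by simp [h]⟩
      · exact ⟨{x, y}, by simp [hU₀def], by simp [h]⟩
      · exact ⟨{x, z}, by simp [hU₀def], by simp [h]⟩
  have hdiam_xy : Metric.diam ((({x, y} : Finset E) : Set E)) = p := by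
    rw [show ((({x, y} : Finset E) : Set E)) = {x, y} by simp, Metric.diam_pair]
  have hdiam_xz : Metric.diam ((({x, z} : Finset E) : Set E)) = q := by
    rw [show ((({x, z} : Finset E) : Set E)) = {x, z} by simp, Metric.diam_pair]
  have hcd0 : coverDiam U₀ = q := by
    have hset : {t : ℝ | ∃ V ∈ U₀, t = Metric.diam (V : Set E)} = {p, q} := by
      ext t
      simp only [hU₀def, Finset.mem_insert, Finset.mem_singleton, Set.mem_setOf_eq,
        Set.mem_insert_iff, Set.mem_singleton_iff]
      constructor
      · rintro ⟨V, (rfl | rfl), rfl⟩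
        · left; exact hdiam_xy
        · right; exact hdiam_xz
      · rintro (rfl | rfl)
        · exact ⟨{x, y}, Or.inl rfl, hdiam_xy.symm⟩
        · exact ⟨{x, z}, Or.inr rfl, hdiam_xz.symm⟩
    rw [coverDiam, hset, csSup_pair, sup_eq_right.2 h1]
  -- bddAbove of the diam set of any 2-cover
  have hbdd : ∀ U : Finset (Finset E), IsTwoCover Fs U →
      BddAbove {t : ℝ | ∃ V ∈ U, t = Metric.diam (V : Set E)} := by
    intro U hU
    refine ⟨Metric.diam (Fs : Set E), ?_⟩
    rintro t ⟨W, hWU, rfl⟩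
    exact Metric.diam_mono (Finset.coe_subset.2 (hU.1 W hWU)) Fs.finite_toSet.isBounded
  -- lower bound q for coverDiam of any 2-cover
  have hlow : ∀ U : Finset (Finset E), IsTwoCover Fs U → q ≤ coverDiam U := by
    intro U hU
    obtain ⟨V, hVU, hzV⟩ := hU.2.2 z (by simp [hFsdef])
    obtain ⟨w, hwV, hwz⟩ :=
      Finset.exists_mem_ne (lt_of_lt_of_le one_lt_two (hU.2.1 V hVU)) z
    have hle : dist w z ≤ Metric.diam (V : Set E) :=
      Metric.dist_le_diam_of_mem V.finite_toSet.isBounded hwV hzV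
    have hw' := hU.1 V hVU hwV
    simp only [hFsdef, Finset.mem_insert, Finset.mem_singleton] at hw'
    have hd : q ≤ Metric.diam (V : Set E) := by
      rcases hw' with rfl | rfl | rfl
      · exact hle
      · exact h2.trans hle
      · exact absurd rfl hwz
    exact hd.trans (le_csSup (hbdd U hU) ⟨V, hVU, rfl⟩)
  have hnabla : nablaF Fs = q := by
    apply le_antisymm
    · exact csInf_le ⟨q, by rintro t ⟨U, hU, rfl⟩; exact hlow U hU⟩
        ⟨U₀, hcov0, hcd0.symm⟩
    · exact le_csInf ⟨coverDiam U₀, U₀, hcov0, rfl⟩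
        (by rintro t ⟨U, hU, rfl⟩; exact hlow U hU)
  -- H^s computation, assuming q < r
  have hHH : q < r → ∀ s : ℝ, HH Fs s = p ^ s + q ^ s := by
    intro hqr s
    have hHc : Hcov U₀ s = p ^ s + q ^ s := by
      rw [Hcov, hU₀def, Finset.sum_pair hpair_ne, hdiam_xy, hdiam_xz]
    have hlb : ∀ U : Finset (Finset E), IsTwoCover Fs U → coverDiam U = q →
        p ^ s + q ^ s ≤ Hcov U s := by
      intro U hU hcd
      have hmemd : ∀ V ∈ U, Metric.diam (V : Set E) ≤ q := by
        intro V hV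
        rw [← hcd]
        exact le_csSup (hbdd U hU) ⟨V, hV, rfl⟩
      -- the member covering y must be {x, y}
      have hxyU : ({x, y} : Finset E) ∈ U := by
        obtain ⟨V, hVU, hyV⟩ := hU.2.2 y (by simp [hFsdef])
        have hsub := hU.1 V hVU
        have hzV : z ∉ V := by
          intro hzV
          have := Metric.dist_le_diam_of_mem V.finite_toSet.isBounded hyV hzV
          have := hmemd V hVU
          rw [← hrdef] at *
          linarith
        obtain ⟨w, hwV, hwy⟩ :=
          Finset.exists_mem_ne (lt_of_lt_of_le one_lt_two (hU.2.1 V hVU)) y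
        have hw' := hsub hwV
        simp only [hFsdef, Finset.mem_insert, Finset.mem_singleton] at hw'
        have hxV : x ∈ V := by
          rcases hw' with rfl | rfl | rfl
          · exact hwV
          · exact absurd rfl hwy
          · exact absurd hwV hzV
        have hVeq : V = {x, y} := by
          apply Finset.Subset.antisymm
          · intro u hu
            have hu' := hsub hu
            simp only [hFsdef, Finset.mem_insert, Finset.mem_singleton] at hu'
            simp only [Finset.mem_insert, Finset.mem_singleton]
            rcases hu' with rfl | rfl | rfl
            · exact Or.inl rfl
            · exact Or.inr rfl
            · exact absurd hu hzV
          · intro u hu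
            simp only [Finset.mem_insert, Finset.mem_singleton] at hu
            rcases hu with rfl | rfl
            · exact hxV
            · exact hyV
        exact hVeq ▸ hVU
      -- the member covering z must be {x, z}
      have hxzU : ({x, z} : Finset E) ∈ U := by
        obtain ⟨V, hVU, hzV⟩ := hU.2.2 z (by simp [hFsdef])
        have hsub := hU.1 V hVU
        have hyV : y ∉ V := by
          intro hyV
          have := Metric.dist_le_diam_of_mem V.finite_toSet.isBounded hyV hzV
          have := hmemd V hVU
          rw [← hrdef] at *
          linarith
        obtain ⟨w, hwV, hwz⟩ :=
          Finset.exists_mem_ne (lt_of_lt_of_le one_lt_two (hU.2.1 V hVU)) z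
        have hw' := hsub hwV
        simp only [hFsdef, Finset.mem_insert, Finset.mem_singleton] at hw'
        have hxV : x ∈ V := by
          rcases hw' with rfl | rfl | rfl
          · exact hwV
          · exact absurd hwV hyV
          · exact absurd rfl hwz
        have hVeq : V = {x, z} := by
          apply Finset.Subset.antisymm
          · intro u hu
            have hu' := hsub hu
            simp only [hFsdef, Finset.mem_insert, Finset.mem_singleton] at hu'
            simp only [Finset.mem_insert, Finset.mem_singleton]
            rcases hu' with rfl | rfl | rfl
            · exact Or.inl rfl
            · exact absurd hu hyV
            · exact Or.inr rfl
          · intro u hu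
            simp only [Finset.mem_insert, Finset.mem_singleton] at hu
            rcases hu with rfl | rfl
            · exact hxV
            · exact hzV
        exact hVeq ▸ hVU
      have hsubU : U₀ ⊆ U := by
        intro W hW
        simp only [hU₀def, Finset.mem_insert, Finset.mem_singleton] at hW
        rcases hW with rfl | rfl
        · exact hxyU
        · exact hxzU
      calc p ^ s + q ^ s = Hcov U₀ s := hHc.symm
        _ ≤ Hcov U s := Finset.sum_le_sum_of_subset_of_nonneg hsubU
            (fun W _ _ => Real.rpow_nonneg Metric.diam_nonneg s)
    apply le_antisymm
    · refine csInf_le ⟨0, ?_⟩ ⟨U₀, hcov0, hcd0.trans hnabla.symm, hHc.symm⟩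
      rintro t ⟨U, hU, _, rfl⟩
      exact Finset.sum_nonneg fun W _ => Real.rpow_nonneg Metric.diam_nonneg s
    · refine le_csInf ⟨Hcov U₀ s, U₀, hcov0, hcd0.trans hnabla.symm, rfl⟩ ?_
      rintro t ⟨U, hU, hcd, rfl⟩
      exact hlb U hU (hcd.trans hnabla)
  -- characterization of the dimension defining set, assuming q < r
  have hsetchar : q < r →
      {s : ℝ | 0 < s ∧ HH Fs s = Metric.diam (Fs : Set E) ^ s}
        = {s : ℝ | 0 < s ∧ p ^ s + q ^ s = r ^ s} := by
    intro hqr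
    ext s
    simp only [Set.mem_setOf_eq]
    rw [hdiam, hHH hqr s]
  constructor
  · rintro ⟨hnf, hdim⟩
    -- no focal points gives q < r
    have hqr : q < r := by
      rcases lt_or_eq_of_le h2 with h | h
      · exact h
      · exfalso
        apply hnf z
        refine ⟨by simp [hFsdef], ?_⟩
        intro w hw hwz
        rw [hdiam]
        simp only [hFsdef, Finset.mem_insert, Finset.mem_singleton] at hw
        rcases hw with rfl | rfl | rfl
        · rw [dist_comm]; exact h
        · rw [dist_comm]
        · exact absurd rfl hwz
    have hpr : p < r := lt_of_le_of_lt h1 hqr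
    rw [dimfH, hsetchar hqr] at hdim
    have hSne : ({s : ℝ | 0 < s ∧ p ^ s + q ^ s = r ^ s}).Nonempty := by
      by_contra hne
      rw [Set.not_nonempty_iff_eq_empty] at hne
      rw [hne, Real.sInf_empty] at hdim
      norm_num at hdim
    obtain ⟨s₀, hs₀pos, hs₀eq⟩ := hSne
    have hsingle : {s : ℝ | 0 < s ∧ p ^ s + q ^ s = r ^ s} = {s₀} := by
      ext s
      simp only [Set.mem_setOf_eq, Set.mem_singleton_iff]
      constructor
      · rintro ⟨hs, hseq⟩
        by_contra hne
        rcases lt_or_gt_of_ne hne with h | h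
        · exact uniq_exponent hp hq hpr hqr h hseq hs₀eq
        · exact uniq_exponent hp hq hpr hqr h hs₀eq hseq
      · rintro rfl
        exact ⟨hs₀pos, hs₀eq⟩
    rw [hsingle, csInf_singleton] at hdim
    rw [hdim, Real.rpow_one, Real.rpow_one, Real.rpow_one] at hs₀eq
    have hw : Wbtw ℝ z x y := by
      rw [← dist_add_dist_eq_iff]
      have e1 : dist z x = q := by rw [hqdef, dist_comm]
      have e2 : dist z y = r := by rw [hrdef, dist_comm]
      rw [e1, ← hpdef, e2]
      linarith [hs₀eq]
    have hcol := hw.collinear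
    have hsets : ({z, x, y} : Set E) = {x, y, z} := by
      ext w; simp only [Set.mem_insert_iff, Set.mem_singleton_iff]; tauto
    rw [hsets] at hcol
    rwa [hFset]
  · intro hC
    rw [hFset] at hC
    have hsum : p + q = r := by
      rcases hC.wbtw_or_wbtw_or_wbtw with hw | hw | hw
      · have := hw.dist_add_dist
        rw [← hpdef, ← hrdef, ← hqdef] at this
        linarith
      · have := hw.dist_add_dist
        rw [← hrdef, dist_comm z x, ← hqdef, dist_comm y x, ← hpdef] at this
        linarith
      · have := hw.dist_add_dist
        rw [dist_comm z x, ← hqdef, ← hpdef, dist_comm z y, ← hrdef] at this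
        linarith
    have hqr : q < r := by linarith
    have hpr : p < r := lt_of_le_of_lt h1 hqr
    constructor
    · intro a ha
      obtain ⟨haF, hfa⟩ := ha
      simp only [hFsdef, Finset.mem_insert, Finset.mem_singleton] at haF
      rcases haF with rfl | rfl | rfl
      · have := hfa y (by simp [hFsdef]) (Ne.symm hxy)
        rw [hdiam, ← hpdef] at this
        linarith
      · have := hfa x (by simp [hFsdef]) hxy
        rw [hdiam, dist_comm, ← hpdef] at this
        linarith
      · have := hfa x (by simp [hFsdef]) hxz
        rw [hdiam, dist_comm, ← hqdef] at this
        linarith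
    · have hS1 : {s : ℝ | 0 < s ∧ HH Fs s = Metric.diam (Fs : Set E) ^ s} = {1} := by
        rw [hsetchar hqr]
        ext s
        simp only [Set.mem_setOf_eq, Set.mem_singleton_iff]
        constructor
        · rintro ⟨hs, hseq⟩
          by_contra hne
          have h1mem : p ^ (1 : ℝ) + q ^ (1 : ℝ) = r ^ (1 : ℝ) := by
            rw [Real.rpow_one, Real.rpow_one, Real.rpow_one]; exact hsum
          rcases lt_or_gt_of_ne hne with h | h
          · exact uniq_exponent hp hq hpr hqr h hseq h1mem
          · exact uniq_exponent hp hq hpr hqr h h1mem hseq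
        · rintro rfl
          exact ⟨one_pos, by rw [Real.rpow_one, Real.rpow_one, Real.rpow_one]; exact hsum⟩
      rw [dimfH, hS1, csInf_singleton]

/-- Permuted triples give the same finset. -/
lemma triple_perm {X : Type*} [DecidableEq X] (a b c : X) :
    ({b, a, c} : Finset X) = {a, b, c} ∧ ({b, c, a} : Finset X) = {a, b, c} ∧
    ({a, c, b} : Finset X) = {a, b, c} ∧ ({c, a, b} : Finset X) = {a, b, c} ∧
    ({c, b, a} : Finset X) = {a, b, c} := by
  refine ⟨?_, ?_, ?_, ?_, ?_⟩ <;>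
    · ext w
      simp only [Finset.mem_insert, Finset.mem_singleton]
      tauto

end Aux

open FinDim in
/-- A three-point subset of `ℝⁿ` has no focal points and `dim_fH(F) = 1`
iff its points are collinear. -/
theorem stmt13 {n : ℕ} (F : Finset (EuclideanSpace ℝ (Fin n))) (hF : F.card = 3) :
    ((∀ a, ¬ IsFocal F a) ∧ dimfH F = 1) ↔
      Collinear ℝ (F : Set (EuclideanSpace ℝ (Fin n))) := by
  classical
  obtain ⟨a, b, c, hab, hac, hbc, rfl⟩ := Finset.card_eq_three.1 hF
  obtain ⟨hba, hbca, hacb, hcab, hcba⟩ := triple_perm a b c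
  obtain ⟨u, v, w, huv, huw, hvw, hd1, hd2, hEq⟩ :
      ∃ u v w : EuclideanSpace ℝ (Fin n), u ≠ v ∧ u ≠ w ∧ v ≠ w ∧
        dist u v ≤ dist u w ∧ dist u w ≤ dist v w ∧
        ({u, v, w} : Finset (EuclideanSpace ℝ (Fin n))) = {a, b, c} := by
    rcases le_total (dist a b) (dist a c) with h1 | h1 <;>
      rcases le_total (dist a c) (dist b c) with h2 | h2 <;>
        rcases le_total (dist a b) (dist b c) with h3 | h3
    · exact ⟨a, b, c, hab, hac, hbc, h1, h2, rfl⟩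
    · exact ⟨a, b, c, hab, hac, hbc, h1, h2, rfl⟩
    · exact ⟨b, a, c, hab.symm, hbc, hac,
        by rw [dist_comm]; exact h3, h2, hba⟩
    · exact ⟨b, c, a, hbc, hab.symm, hac.symm,
        by rw [dist_comm b a]; exact h3,
        by rw [dist_comm b a, dist_comm c a]; exact h1, hbca⟩
    · exact ⟨a, c, b, hac, hab, hbc.symm,
        h1, by rw [dist_comm c b]; exact h3, hacb⟩
    · exact ⟨c, a, b, hac.symm, hbc.symm, hab,
        by rw [dist_comm c a, dist_comm c b]; exact h2,
        by rw [dist_comm c b]; exact h3, hcab⟩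
    · exact ⟨a, b, c, hab, hac, hbc, by linarith, by linarith, rfl⟩
    · exact ⟨c, b, a, hbc.symm, hac.symm, hab.symm,
        by rw [dist_comm c b, dist_comm c a]; exact h2,
        by rw [dist_comm c a, dist_comm b a]; exact h1, hcba⟩
  rw [← hEq]
  exact triple_main u v w huv huw hvw hd1 hd2
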